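/- Let A ∈ ℝ^{n_f×n_f}, B, B̂ ∈ ℝ^{n_f×n_u}, γ > 0, and let X ∈ ℝ^{n_f×n_f} be symmetric positive definite with P = X^{-1}. Then the 3×3 block matrix M = [[X, A X, B − B̂], [X Aᵀ, X, 0], [Bᵀ − B̂ᵀ, 0, γ I_{n_u}]] is positive definite if and only if for all (e, u) ∈ ℝ^{n_f} × ℝ^{n_u} with (e, u) ≠ (0, 0), (A e + (B − B̂) u)ᵀ P (A e + (B − B̂) u) − eᵀ P e − γ ‖u‖₂² < 0. -/

import Mathlib

open Matrix

private lemma dot_mulVec_symm {m n : Type*} [Fintype m] [Fintype n]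
    (M : Matrix m n ℝ) (a : m → ℝ) (b : n → ℝ) :
    a ⬝ᵥ M *ᵥ b = b ⬝ᵥ Mᵀ *ᵥ a := by
  rw [dotProduct_mulVec, ← mulVec_transpose, dotProduct_comm]

private lemma sum_elim_ne_zero {m n : Type*} {a : m → ℝ} {b : n → ℝ}
    (h : a ≠ 0 ∨ b ≠ 0) : Sum.elim a b ≠ 0 := by
  intro hz
  rcases h with h | h
  · exact h (funext fun i => congrFun hz (Sum.inl i))
  · exact h (funext fun i => congrFun hz (Sum.inr i))

theorem generalized_H2_LMI_iff {nf nu : ℕ}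
    (A : Matrix (Fin nf) (Fin nf) ℝ)
    (B Bh : Matrix (Fin nf) (Fin nu) ℝ)
    (γ : ℝ) (hγ : 0 < γ)
    (X : Matrix (Fin nf) (Fin nf) ℝ) (hX : X.PosDef)
    (P : Matrix (Fin nf) (Fin nf) ℝ) (hP : P = X⁻¹) :
    (Matrix.fromBlocks
        (Matrix.fromBlocks X (A * X) (X * Aᵀ) X)
        (Matrix.fromRows (B - Bh) (0 : Matrix (Fin nf) (Fin nu) ℝ))
        (Matrix.fromCols (Bᵀ - Bhᵀ) (0 : Matrix (Fin nu) (Fin nf) ℝ))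
        (γ • (1 : Matrix (Fin nu) (Fin nu) ℝ))).PosDef
    ↔ ∀ (e : Fin nf → ℝ) (u : Fin nu → ℝ), (e ≠ 0 ∨ u ≠ 0) →
        (A.mulVec e + (B - Bh).mulVec u) ⬝ᵥ
            P.mulVec (A.mulVec e + (B - Bh).mulVec u)
          - e ⬝ᵥ P.mulVec e
          - γ * (u ⬝ᵥ u) < 0 := by
  have hXdet : IsUnit X.det := (Matrix.isUnit_iff_isUnit_det X).mp hX.isUnit
  have hPX : P * X = 1 := by rw [hP]; exact nonsing_inv_mul X hXdet
  have hXP : X * P = 1 := by rw [hP]; exact mul_nonsing_inv X hXdet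
  have hXsym : Xᵀ = X := by
    have := hX.isHermitian
    rwa [Matrix.IsHermitian, conjTranspose_eq_transpose_of_trivial] at this
  have hPsym : Pᵀ = P := by rw [hP, transpose_nonsing_inv, hXsym]
  have hXPv : ∀ w : Fin nf → ℝ, X *ᵥ (P *ᵥ w) = w := fun w => by
    rw [mulVec_mulVec, hXP, one_mulVec]
  have hPXv : ∀ w : Fin nf → ℝ, P *ᵥ (X *ᵥ w) = w := fun w => by
    rw [mulVec_mulVec, hPX, one_mulVec]
  set M := (Matrix.fromBlocks
        (Matrix.fromBlocks X (A * X) (X * Aᵀ) X)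
        (Matrix.fromRows (B - Bh) (0 : Matrix (Fin nf) (Fin nu) ℝ))
        (Matrix.fromCols (Bᵀ - Bhᵀ) (0 : Matrix (Fin nu) (Fin nf) ℝ))
        (γ • (1 : Matrix (Fin nu) (Fin nu) ℝ))) with hM
  have key : ∀ (x y : Fin nf → ℝ) (u : Fin nu → ℝ),
      Sum.elim (Sum.elim x y) u ⬝ᵥ M *ᵥ Sum.elim (Sum.elim x y) u
      = (x + P *ᵥ (A *ᵥ (X *ᵥ y) + (B - Bh) *ᵥ u)) ⬝ᵥ
          X *ᵥ (x + P *ᵥ (A *ᵥ (X *ᵥ y) + (B - Bh) *ᵥ u))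
        + ((X *ᵥ y) ⬝ᵥ P *ᵥ (X *ᵥ y) + γ * (u ⬝ᵥ u)
          - (A *ᵥ (X *ᵥ y) + (B - Bh) *ᵥ u) ⬝ᵥ
              P *ᵥ (A *ᵥ (X *ᵥ y) + (B - Bh) *ᵥ u)) := by
    intro x y u
    set v := A *ᵥ (X *ᵥ y) + (B - Bh) *ᵥ u with hv
    have e1 : (X * Aᵀ)ᵀ = A * X := by rw [transpose_mul, transpose_transpose, hXsym]
    have e2 : (Bᵀ - Bhᵀ)ᵀ = B - Bh := by rw [transpose_sub, transpose_transpose, transpose_transpose]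
    have lhs_eq : Sum.elim (Sum.elim x y) u ⬝ᵥ M *ᵥ Sum.elim (Sum.elim x y) u
        = x ⬝ᵥ X *ᵥ x + x ⬝ᵥ (A * X) *ᵥ y + x ⬝ᵥ (B - Bh) *ᵥ u
          + (x ⬝ᵥ (A * X) *ᵥ y + y ⬝ᵥ X *ᵥ y)
          + (x ⬝ᵥ (B - Bh) *ᵥ u + γ * (u ⬝ᵥ u)) := by
      rw [hM]
      simp only [fromBlocks_mulVec, Sum.elim_comp_inl, Sum.elim_comp_inr,
        fromRows_mulVec, fromCols_mulVec_sumElim,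
        sumElim_dotProduct_sumElim, zero_mulVec, add_zero, dotProduct_zero,
        dotProduct_add, smul_mulVec, one_mulVec, dotProduct_smul]
      rw [dot_mulVec_symm (X * Aᵀ) y x, e1, dot_mulVec_symm (Bᵀ - Bhᵀ) u x, e2,
        smul_eq_mul]
      ring
    have hx_v : x ⬝ᵥ v = x ⬝ᵥ (A * X) *ᵥ y + x ⬝ᵥ (B - Bh) *ᵥ u := by
      rw [hv]
      simp [dotProduct_add, mulVec_mulVec]
    have rhs_eq : (x + P *ᵥ v) ⬝ᵥ X *ᵥ (x + P *ᵥ v)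
        = x ⬝ᵥ X *ᵥ x + 2 * (x ⬝ᵥ v) + v ⬝ᵥ P *ᵥ v := by
      have h1 : x ⬝ᵥ X *ᵥ (P *ᵥ v) = x ⬝ᵥ v := by rw [hXPv]
      have h2 : (P *ᵥ v) ⬝ᵥ X *ᵥ x = x ⬝ᵥ v := by
        rw [dot_mulVec_symm X (P *ᵥ v) x, hXsym, hXPv]
      have h3 : (P *ᵥ v) ⬝ᵥ X *ᵥ (P *ᵥ v) = v ⬝ᵥ P *ᵥ v := by
        rw [hXPv, dotProduct_comm]
      rw [add_dotProduct, mulVec_add, dotProduct_add, dotProduct_add, h1, h2, h3]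
      ring
    have hePe : (X *ᵥ y) ⬝ᵥ P *ᵥ (X *ᵥ y) = y ⬝ᵥ X *ᵥ y := by
      rw [hPXv, dotProduct_comm]
    rw [lhs_eq, rhs_eq, hePe, hx_v]
    ring
  constructor
  · intro hMpd e u hne
    set v := A *ᵥ e + (B - Bh) *ᵥ u with hv
    have hz : (Sum.elim (Sum.elim (-(P *ᵥ v)) (P *ᵥ e)) u) ≠ 0 := by
      apply sum_elim_ne_zero
      rcases hne with h | h
      · left; apply sum_elim_ne_zero; right
        intro h0
        exact h (by rw [← hXPv e, h0, mulVec_zero])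
      · right; exact h
    have hpos := hMpd.dotProduct_mulVec_pos hz
    rw [star_trivial, key] at hpos
    rw [hXPv e] at hpos
    have hzero : (-(P *ᵥ v) + P *ᵥ (A *ᵥ e + (B - Bh) *ᵥ u)) = 0 := by
      rw [← hv]; simp
    rw [hzero] at hpos
    simp only [zero_dotProduct, zero_add] at hpos
    linarith
  · intro h
    refine posDef_iff_dotProduct_mulVec.mpr ⟨?_, ?_⟩
    · show _ = M
      rw [conjTranspose_eq_transpose_of_trivial, hM, fromBlocks_transpose,
        fromBlocks_transpose, transpose_fromRows, transpose_fromCols,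
        transpose_mul, transpose_mul, transpose_transpose, hXsym,
        transpose_sub, transpose_transpose, transpose_transpose,
        transpose_sub, transpose_smul, transpose_one, transpose_zero, transpose_zero]
    · intro z hz
      rw [star_trivial]
      have hzdecomp : z = Sum.elim (Sum.elim (fun i => z (Sum.inl (Sum.inl i)))
          (fun i => z (Sum.inl (Sum.inr i)))) (fun i => z (Sum.inr i)) := by
        funext i
        rcases i with (i | i) | i <;> rfl
      set x : Fin nf → ℝ := fun i => z (Sum.inl (Sum.inl i))
      set y : Fin nf → ℝ := fun i => z (Sum.inl (Sum.inr i))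
      set u : Fin nu → ℝ := fun i => z (Sum.inr i)
      rw [hzdecomp, key]
      by_cases hyu : y = 0 ∧ u = 0
      · obtain ⟨hy, hu⟩ := hyu
        have hx : x ≠ 0 := by
          intro hx0
          apply hz
          rw [hzdecomp, hx0, hy, hu]
          funext i; rcases i with (i | i) | i <;> rfl
        rw [hy, hu]
        simp only [mulVec_zero, add_zero, zero_add, dotProduct_zero, mul_zero, sub_zero]
        have := hX.dotProduct_mulVec_pos hx
        rw [star_trivial] at this
        simpa using this
      · have hne : X *ᵥ y ≠ 0 ∨ u ≠ 0 := by
          rw [not_and_or] at hyu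
          rcases hyu with hy | hu
          · left; intro h0
            exact hy (by rw [← hPXv y, h0, mulVec_zero])
          · right; exact hu
        have h2 := h (X *ᵥ y) u hne
        have h3 : 0 ≤ (x + P *ᵥ (A *ᵥ (X *ᵥ y) + (B - Bh) *ᵥ u)) ⬝ᵥ
            X *ᵥ (x + P *ᵥ (A *ᵥ (X *ᵥ y) + (B - Bh) *ᵥ u)) := by
          have := hX.posSemidef.dotProduct_mulVec_nonneg (x + P *ᵥ (A *ᵥ (X *ᵥ y) + (B - Bh) *ᵥ u))
          rwa [star_trivial] at this
        linarith
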